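/- arXiv:1908.01935 — 10 statements merged into one kernel-verified Lean document; each statement's English description precedes it below -/
import Mathlib

section
/- Let X be a nonzero complex Hilbert space and let A be a bounded normal operator on X (i.e., A commutes with its adjoint A*). Then A is not hypercyclic: there is no vector f in X whose orbit {Aⁿf : n ∈ ℕ} is dense in X. -/
open ContinuousLinearMap

/-- A bounded normal operator on a nonzero complex Hilbert space is not hypercyclic. -/
theorem normal_not_hypercyclic {X : Type*} [NormedAddCommGroup X] [InnerProductSpace ℂ X]
    [CompleteSpace X] [Nontrivial X] (A : X →L[ℂ] X)
    (hnormal : A * ContinuousLinearMap.adjoint A = ContinuousLinearMap.adjoint A * A) :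
    ¬ ∃ f : X, DenseRange (fun n : ℕ => (A ^ n) f) := by
  rintro ⟨f, hf⟩
  -- adjoint preserves norms of images
  have hadj : ∀ y : X, ‖adjoint A y‖ = ‖A y‖ := by
    intro y
    have h1 : (inner ℂ (adjoint A y) (adjoint A y) : ℂ) = inner ℂ (A y) (A y) := by
      rw [adjoint_inner_left]
      have : A (adjoint A y) = adjoint A (A y) := by
        have := congrArg (fun T : X →L[ℂ] X => T y) hnormal
        simpa using this
      rw [this, adjoint_inner_right]
    have h3 : ‖adjoint A y‖ ^ 2 = ‖A y‖ ^ 2 := by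
      rw [← @inner_self_eq_norm_sq ℂ, ← @inner_self_eq_norm_sq ℂ, h1]
    exact (sq_eq_sq₀ (norm_nonneg _) (norm_nonneg _)).mp h3
  -- log-convexity: ‖Ax‖² ≤ ‖A²x‖ * ‖x‖
  have hlc : ∀ x : X, ‖A x‖ ^ 2 ≤ ‖A (A x)‖ * ‖x‖ := by
    intro x
    have h1 : (inner ℂ (A x) (A x) : ℂ) = inner ℂ (adjoint A (A x)) x := by
      rw [adjoint_inner_left]
    have h2 : ‖A x‖ ^ 2 = ‖(inner ℂ (adjoint A (A x)) x : ℂ)‖ := by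
      rw [← h1, inner_self_eq_norm_sq_to_K]
      simp [norm_pow]
    rw [h2, ← hadj (A x)]
    exact norm_inner_le_norm _ _
  set g : ℕ → X := fun n => (A ^ n) f with hg
  have hgsucc : ∀ n, g (n + 1) = A (g n) := by
    intro n
    simp only [hg, pow_succ', mul_apply]
    rfl
  -- density facts
  have hsmall : ∀ ε > 0, ∃ n, ‖g n‖ < ε := by
    intro ε hε
    obtain ⟨n, hn⟩ := Metric.denseRange_iff.mp hf 0 ε hε
    exact ⟨n, by simpa [dist_eq_norm] using hn⟩
  have hbig : ∀ M : ℝ, ∃ n, M < ‖g n‖ := by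
    intro M
    obtain ⟨v, hv⟩ := exists_ne (0 : X)
    -- a point of norm > M+1... scale v
    obtain ⟨c, hc⟩ : ∃ c : ℂ, (max M 0) + 1 ≤ ‖c • v‖ := by
      refine ⟨(((max M 0) + 1) / ‖v‖ : ℝ), ?_⟩
      have hv' : 0 < ‖v‖ := norm_pos_iff.mpr hv
      rw [norm_smul]
      simp only [Complex.norm_real, Real.norm_eq_abs]
      rw [abs_of_nonneg (by positivity), div_mul_cancel₀ _ hv'.ne']
    obtain ⟨n, hn⟩ := Metric.denseRange_iff.mp hf (c • v) 1 one_pos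
    refine ⟨n, ?_⟩
    have h1 : ‖c • v‖ - ‖g n‖ ≤ ‖c • v - g n‖ := norm_sub_norm_le _ _
    have h2 : ‖c • v - g n‖ < 1 := by simpa [dist_eq_norm] using hn
    have : M ≤ max M 0 := le_max_left _ _
    linarith
  -- case on some iterate being zero
  by_cases hz : ∃ n, g n = 0
  · obtain ⟨N, hN⟩ := hz
    have hzero : ∀ n, N ≤ n → g n = 0 := by
      intro n hn
      induction n with
      | zero => simpa [Nat.le_zero.mp hn] using hN
      | succ m ih =>
        rcases Nat.lt_or_ge N (m + 1) with h | h
        · rw [hgsucc, ih (Nat.lt_succ_iff.mp h), map_zero]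
        · exact (le_antisymm hn h) ▸ hN
    -- orbit is bounded, contradicting hbig
    set M : ℝ := (Finset.range (N + 1)).sup' Finset.nonempty_range_add_one (fun k : ℕ => ‖g k‖) with hM
    have hbd : ∀ n, ‖g n‖ ≤ M := by
      intro n
      rcases Nat.lt_or_ge n (N + 1) with h | h
      · exact Finset.le_sup' (fun k : ℕ => ‖g k‖) (Finset.mem_range.mpr h)
      · rw [hzero n (by omega), norm_zero]
        exact le_trans (norm_nonneg (g 0) : (0:ℝ) ≤ ‖g 0‖) (Finset.le_sup' (fun k : ℕ => ‖g k‖)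
          (Finset.mem_range.mpr (Nat.succ_pos N)))
    obtain ⟨n, hn⟩ := hbig M
    exact absurd (hbd n) (not_le.mpr hn)
  · push_neg at hz
    have hpos : ∀ n, 0 < ‖g n‖ := fun n => norm_pos_iff.mpr (hz n)
    -- log-convexity for the sequence
    have hseq : ∀ n, ‖g (n + 1)‖ ^ 2 ≤ ‖g (n + 2)‖ * ‖g n‖ := by
      intro n
      have := hlc (g n)
      rw [← hgsucc, ← hgsucc] at this
      exact this
    by_cases hdec : ∀ n, ‖g (n + 1)‖ < ‖g n‖
    · -- sequence decreasing, bounded by ‖g 0‖, contradicts hbig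
      have hbd : ∀ n, ‖g n‖ ≤ ‖g 0‖ := by
        intro n
        induction n with
        | zero => exact le_refl _
        | succ m ih => exact le_trans (hdec m).le ih
      obtain ⟨n, hn⟩ := hbig ‖g 0‖
      exact absurd (hbd n) (not_le.mpr hn)
    · push_neg at hdec
      obtain ⟨N, hN⟩ := hdec
      -- from N on, nondecreasing
      have hmono : ∀ n, N ≤ n → ‖g n‖ ≤ ‖g (n + 1)‖ := by
        intro n hn
        induction n with
        | zero => simpa [Nat.le_zero.mp hn] using hN
        | succ m ih =>
          rcases Nat.lt_or_ge N (m + 1) with h | h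
          · have ihm := ih (Nat.lt_succ_iff.mp h)
            have hs := hseq m
            have h1 : ‖g (m + 1)‖ ^ 2 ≤ ‖g (m + 2)‖ * ‖g (m + 1)‖ :=
              le_trans hs (by nlinarith [hpos m, hpos (m+2)])
            have := hpos (m + 1)
            nlinarith
          · have : N = m + 1 := le_antisymm hn h
            subst this
            exact hN
      have htail : ∀ n, N ≤ n → ‖g N‖ ≤ ‖g n‖ := by
        intro n hn
        induction n with
        | zero => simp [Nat.le_zero.mp hn]
        | succ m ih =>
          rcases Nat.lt_or_ge N (m + 1) with h | h
          · exact le_trans (ih (Nat.lt_succ_iff.mp h)) (hmono m (Nat.lt_succ_iff.mp h))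
          · have : N = m + 1 := le_antisymm hn h
            simp [this]
      -- lower bound for all norms
      set m : ℝ := (Finset.range (N + 1)).inf' Finset.nonempty_range_add_one
        (fun k => ‖g k‖) with hm
      have hmpos : 0 < m := by
        rw [hm, Finset.lt_inf'_iff]
        exact fun k _ => hpos k
      have hlb : ∀ n, m ≤ ‖g n‖ := by
        intro n
        rcases Nat.lt_or_ge n (N + 1) with h | h
        · exact Finset.inf'_le _ (Finset.mem_range.mpr h)
        · exact le_trans (Finset.inf'_le _ (Finset.self_mem_range_succ N))
            (htail n (by omega))
      obtain ⟨n, hn⟩ := hsmall m hmpos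
      exact absurd (hlb n) (not_le.mpr hn)
end

section
/- Let A be a bounded normal operator on a complex Hilbert space X. Then for every vector f ∈ X, either there exists a constant c > 0 such that ‖Aⁿf‖ ≥ c for all n ∈ ℕ, or ‖Aⁿf‖ ≤ ‖f‖ for all n ∈ ℕ. (In particular, every orbit under A is either bounded away from zero or norm-bounded by ‖f‖, hence never dense when X ≠ {0}.) -/
open ContinuousLinearMap

/-- For a bounded normal operator `A` on a complex Hilbert space, every orbit is either
bounded away from zero or norm-bounded by `‖f‖`. -/
theorem normal_orbit_dichotomy {X : Type*} [NormedAddCommGroup X] [InnerProductSpace ℂ X]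
    [CompleteSpace X] (A : X →L[ℂ] X)
    (hnormal : A * ContinuousLinearMap.adjoint A = ContinuousLinearMap.adjoint A * A)
    (f : X) :
    (∃ c : ℝ, 0 < c ∧ ∀ n : ℕ, c ≤ ‖(A ^ n) f‖) ∨ (∀ n : ℕ, ‖(A ^ n) f‖ ≤ ‖f‖) := by
  -- ‖A† x‖ = ‖A x‖
  have hnorm : ∀ x : X, ‖adjoint A x‖ = ‖A x‖ := by
    intro x
    have h1 : (inner ℂ (adjoint A x) (adjoint A x) : ℂ) = inner ℂ (A x) (A x) := by
      rw [adjoint_inner_left]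
      have : A (adjoint A x) = adjoint A (A x) := by
        have := congrArg (fun T : X →L[ℂ] X => T x) hnormal
        simpa [mul_apply] using this
      rw [this, adjoint_inner_right]
    have h2 : ‖adjoint A x‖ ^ 2 = ‖A x‖ ^ 2 := by
      rw [← inner_self_eq_norm_sq (𝕜 := ℂ), ← inner_self_eq_norm_sq (𝕜 := ℂ), h1]
    nlinarith [norm_nonneg (adjoint A x), norm_nonneg (A x)]
  -- key log-convexity inequality
  have key : ∀ x : X, ‖A x‖ ^ 2 ≤ ‖A (A x)‖ * ‖x‖ := by
    intro x
    have h2 : (inner ℂ (A x) (A x) : ℂ) = inner ℂ (adjoint A (A x)) x := by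
      rw [adjoint_inner_left]
    calc ‖A x‖ ^ 2 = RCLike.re (inner ℂ (A x) (A x) : ℂ) :=
          (inner_self_eq_norm_sq (𝕜 := ℂ) (A x)).symm
      _ = RCLike.re (inner ℂ (adjoint A (A x)) x : ℂ) := by rw [h2]
      _ ≤ ‖(inner ℂ (adjoint A (A x)) x : ℂ)‖ := RCLike.re_le_norm _
      _ ≤ ‖adjoint A (A x)‖ * ‖x‖ := norm_inner_le_norm _ _
      _ = ‖A (A x)‖ * ‖x‖ := by rw [hnorm]
  set a : ℕ → ℝ := fun n => ‖(A ^ n) f‖ with ha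
  have hsucc : ∀ n : ℕ, (A ^ (n + 1)) f = A ((A ^ n) f) := by
    intro n; rw [pow_succ']; rfl
  have hkey : ∀ n : ℕ, a (n + 1) ^ 2 ≤ a (n + 2) * a n := by
    intro n
    have := key ((A ^ n) f)
    have e2 : (A ^ (n + 2)) f = A (A ((A ^ n) f)) := by
      rw [show n + 2 = n + 1 + 1 from rfl, hsucc, hsucc]
    simpa only [ha, hsucc, e2] using this
  have hanonneg : ∀ n : ℕ, 0 ≤ a n := fun n => norm_nonneg _
  have hzero : ∀ n : ℕ, a n = 0 → ∀ m : ℕ, n ≤ m → a m = 0 := by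
    intro n h0 m hm
    have hx : (A ^ n) f = 0 := norm_eq_zero.mp h0
    obtain ⟨k, rfl⟩ : ∃ k, m = k + n := ⟨m - n, by omega⟩
    simp only [ha, pow_add, ContinuousLinearMap.mul_apply, hx, map_zero, norm_zero]
  by_cases hmono : ∀ n : ℕ, a (n + 1) ≤ a n
  · right
    intro n
    induction n with
    | zero => simp [ha]
    | succ k ih =>
      calc ‖(A ^ (k+1)) f‖ = a (k+1) := rfl
        _ ≤ a k := hmono k
        _ ≤ ‖f‖ := ih
  · left
    push_neg at hmono
    obtain ⟨N, hN⟩ := hmono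
    have haN : 0 < a N := by
      rcases lt_or_eq_of_le (hanonneg N) with h | h
      · exact h
      · exfalso
        have h1 : a (N + 1) ^ 2 ≤ a (N + 2) * a N := hkey N
        have h2 : 0 < a (N + 1) := lt_of_le_of_lt (le_of_eq h) hN
        rw [← h, mul_zero] at h1
        nlinarith
    have hinc : ∀ k : ℕ, 0 < a (N + k) ∧ a (N + k) < a (N + k + 1) := by
      intro k
      induction k with
      | zero => exact ⟨haN, by simpa using hN⟩
      | succ j ih =>
        obtain ⟨h1, h2⟩ := ih
        have h3 : 0 < a (N + j + 1) := lt_trans h1 h2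
        have h4 := hkey (N + j)
        refine ⟨h3, ?_⟩
        have h5 : a (N + j + 1) < a (N + j + 2) := by nlinarith
        exact h5
    have hpos : ∀ n : ℕ, n ≤ N → 0 < a n := by
      intro n hn
      rcases lt_or_eq_of_le (hanonneg n) with h | h
      · exact h
      · exfalso
        have hz : a (N + 1) = 0 := hzero n h.symm (N + 1) (by omega)
        have := (hinc 0).1
        linarith [hN, hz, hanonneg N]
    have hge : ∀ k : ℕ, a N ≤ a (N + k) := by
      intro k
      induction k with
      | zero => simp
      | succ j ih => exact le_trans ih (le_of_lt (hinc j).2)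
    refine ⟨(Finset.range (N + 1)).inf' ⟨0, by simp⟩ a, ?_, ?_⟩
    · exact (Finset.lt_inf'_iff _).mpr fun n hn =>
        hpos n (Nat.lt_succ_iff.mp (Finset.mem_range.mp hn))
    · intro n
      by_cases hn : n ≤ N
      · exact Finset.inf'_le _ (Finset.mem_range.mpr (by omega))
      · calc (Finset.range (N + 1)).inf' ⟨0, by simp⟩ a ≤ a N :=
              Finset.inf'_le _ (Finset.mem_range.mpr (by omega))
          _ ≤ a (N + (n - N)) := hge (n - N)
          _ = ‖(A ^ n) f‖ := by congr 1; omega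
end

section
/- Let A be a bounded normal operator on a complex Hilbert space X. Then for every vector f ∈ X, either there exists a constant c > 0 such that ‖e^{tA}f‖ ≥ c for all t ≥ 0, or ‖e^{tA}f‖ ≤ ‖f‖ for all t ≥ 0. (In particular, every exponential orbit {e^{tA}f : t ≥ 0} is either bounded away from zero or norm-bounded by ‖f‖, hence never dense when X ≠ {0}.) -/
set_option synthInstance.maxHeartbeats 1000000
set_option maxHeartbeats 2000000

open NormedSpace ContinuousLinearMap RCLike in
/-- For a bounded normal operator `A` on a complex Hilbert space, every exponential orbit
`{e^{tA} f : t ≥ 0}` is either bounded away from zero or norm-bounded by `‖f‖`. -/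
theorem normal_exp_orbit_dichotomy {X : Type*} [NormedAddCommGroup X] [InnerProductSpace ℂ X]
    [CompleteSpace X] (A : X →L[ℂ] X)
    (hnormal : A * ContinuousLinearMap.adjoint A = ContinuousLinearMap.adjoint A * A)
    (f : X) :
    (∃ c : ℝ, 0 < c ∧ ∀ t : ℝ, 0 ≤ t → c ≤ ‖NormedSpace.exp (t • A) f‖) ∨
      (∀ t : ℝ, 0 ≤ t → ‖NormedSpace.exp (t • A) f‖ ≤ ‖f‖) := by
  letI : NormedAlgebra ℚ (X →L[ℂ] X) := .restrictScalars ℚ ℂ _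
  set B : X →L[ℂ] X := A + adjoint A with hBdef
  have hB : adjoint B = B := by
    rw [hBdef, map_add, adjoint_adjoint, add_comm]
  -- exp of a real multiple of B is self-adjoint
  have hEadj : ∀ s : ℝ, adjoint (NormedSpace.exp (s • B)) = NormedSpace.exp (s • B) := by
    intro s
    rw [← star_eq_adjoint, NormedSpace.star_exp, star_smul, star_trivial, star_eq_adjoint, hB]
  -- exp commutes with B
  have hcomB : ∀ (s : ℝ) (x : X),
      (NormedSpace.exp (s • B)) (B x) = B ((NormedSpace.exp (s • B)) x) := by
    intro s x
    have h : Commute B (NormedSpace.exp (s • B)) :=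
      ((Commute.refl B).smul_right s).exp_right
    rw [← mul_apply_eq_comp, ← h.eq, mul_apply_eq_comp]
  -- splitting of exp
  have hsplit2 : ∀ t : ℝ, NormedSpace.exp (t • B)
      = NormedSpace.exp ((t/2) • B) * NormedSpace.exp ((t/2) • B) := by
    intro t
    rw [← NormedSpace.exp_add_of_commute (((Commute.refl B).smul_left (t/2)).smul_right (t/2)),
      ← add_smul]
    norm_num
  -- the auxiliary function
  set φ : X → ℝ → ℝ := fun g t => re (inner ℂ f ((NormedSpace.exp (t • B)) g) : ℂ) with hφdef
  -- derivative
  have hderiv : ∀ (g : X) (t : ℝ), HasDerivAt (φ g) (φ (B g) t) t := by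
    intro g t
    have h1 : HasDerivAt (fun s : ℝ => NormedSpace.exp (s • B))
        (NormedSpace.exp (t • B) * B) t := hasDerivAt_exp_smul_const B t
    have h2 := ((reCLM.comp ((innerSL ℂ f).restrictScalars ℝ)).comp
        ((ContinuousLinearMap.apply ℂ X g).restrictScalars ℝ)).hasFDerivAt.comp_hasDerivAt t h1
    simpa [hφdef, mul_apply_eq_comp, Function.comp_def] using h2
  -- norm identity
  have hnorm : ∀ t : ℝ, ‖NormedSpace.exp (t • A) f‖ ^ 2 = φ f t := by
    intro t
    have hc : Commute (adjoint A) A := hnormal.symm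
    have hadj : adjoint (NormedSpace.exp (t • A)) = NormedSpace.exp (t • adjoint A) := by
      rw [← star_eq_adjoint, NormedSpace.star_exp, star_smul, star_trivial, star_eq_adjoint]
    have hsplit : NormedSpace.exp (t • B)
        = NormedSpace.exp (t • adjoint A) * NormedSpace.exp (t • A) := by
      rw [hBdef, smul_add, add_comm,
        NormedSpace.exp_add_of_commute ((hc.smul_left t).smul_right t)]
    rw [hφdef]
    simp only
    rw [hsplit, mul_apply_eq_comp, ← hadj, adjoint_inner_right, ← inner_self_eq_norm_sq (𝕜 := ℂ)]
  -- value at 0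
  have hzero : φ f 0 = ‖f‖ ^ 2 := by
    rw [hφdef]
    simp only [zero_smul, NormedSpace.exp_zero, one_apply_eq_self]
    rw [← inner_self_eq_norm_sq (𝕜 := ℂ)]
  -- moving self-adjoint operators across the inner product
  have hmoveB : ∀ x y : X, (inner ℂ (B x) y : ℂ) = inner ℂ x (B y) := by
    intro x y
    conv_lhs => rw [← hB]
    rw [adjoint_inner_left]
  have hmoveE : ∀ (s : ℝ) (x y : X),
      (inner ℂ ((NormedSpace.exp (s • B)) x) y : ℂ)
        = inner ℂ x ((NormedSpace.exp (s • B)) y) := by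
    intro s x y
    conv_lhs => rw [← hEadj s]
    rw [adjoint_inner_left]
  -- second derivative is nonnegative
  have hpos : ∀ t : ℝ, 0 ≤ φ (B (B f)) t := by
    intro t
    have e1 : (NormedSpace.exp (t • B)) (B (B f))
        = (NormedSpace.exp ((t/2) • B)) (B (B ((NormedSpace.exp ((t/2) • B)) f))) := by
      rw [hsplit2 t, mul_apply_eq_comp]
      congr 1
      simp only [hcomB]
    rw [hφdef]
    simp only
    rw [e1, ← hmoveE (t/2) f, ← hmoveB]
    exact inner_self_nonneg
  -- φ (B f) is monotone
  have hmono : Monotone (φ (B f)) :=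
    monotone_of_deriv_nonneg (fun t => (hderiv (B f) t).differentiableAt)
      (fun t => by rw [(hderiv (B f) t).deriv]; exact hpos t)
  -- continuity of the orbit norm
  have hcont : Continuous fun t : ℝ => ‖NormedSpace.exp (t • A) f‖ := by
    have h1 : Continuous fun t : ℝ => (t • A : X →L[ℂ] X) :=
      continuous_id.smul continuous_const
    exact ((ContinuousLinearMap.apply ℂ X f).continuous.comp
      (NormedSpace.exp_continuous.comp h1)).norm
  by_cases hcase : ∀ t : ℝ, 0 ≤ t → φ (B f) t ≤ 0
  · -- orbit is norm-bounded by ‖f‖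
    right
    intro t ht
    have hanti : AntitoneOn (φ f) (Set.Ici (0 : ℝ)) := by
      apply antitoneOn_of_deriv_nonpos (convex_Ici 0)
      · have hdiff : Differentiable ℝ (φ f) := fun s => (hderiv f s).differentiableAt
        exact hdiff.continuous.continuousOn
      · have hdiff : Differentiable ℝ (φ f) := fun s => (hderiv f s).differentiableAt
        exact hdiff.differentiableOn
      · intro s hs
        rw [(hderiv f s).deriv]
        exact hcase s (le_of_lt (by simpa using hs))
    have h1 : φ f t ≤ φ f 0 := hanti (Set.self_mem_Ici) ht ht
    have h2 : ‖NormedSpace.exp (t • A) f‖ ^ 2 ≤ ‖f‖ ^ 2 := by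
      rw [hnorm, ← hzero]; exact h1
    nlinarith [norm_nonneg (NormedSpace.exp (t • A) f), norm_nonneg f]
  · -- orbit is bounded away from 0
    left
    push_neg at hcase
    obtain ⟨t₀, ht₀, hpos₀⟩ := hcase
    -- f ≠ 0
    have hf : f ≠ 0 := by
      rintro rfl
      simp [hφdef] at hpos₀
    -- exp never kills f
    have hker : ∀ t : ℝ, NormedSpace.exp (t • A) f ≠ 0 := by
      intro t h0
      have hinv : NormedSpace.exp (-(t • A)) * NormedSpace.exp (t • A) = 1 := by
        rw [← NormedSpace.exp_add_of_commute ((Commute.refl (t • A)).neg_left),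
          neg_add_cancel, NormedSpace.exp_zero]
      have : f = (NormedSpace.exp (-(t • A))) ((NormedSpace.exp (t • A)) f) := by
        rw [← mul_apply_eq_comp, hinv, one_apply_eq_self]
      rw [this, h0, map_zero] at hf
      exact hf rfl
    -- minimum on [0, t₀]
    obtain ⟨t₁, ht₁, hmin⟩ := (isCompact_Icc (a := (0:ℝ)) (b := t₀)).exists_isMinOn
      (Set.nonempty_Icc.mpr ht₀) hcont.continuousOn
    set c : ℝ := ‖NormedSpace.exp (t₁ • A) f‖ with hcdef
    have hc : 0 < c := norm_pos_iff.mpr (hker t₁)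
    refine ⟨c, hc, fun t ht => ?_⟩
    rcases le_or_gt t t₀ with htle | htgt
    · exact hmin (Set.mem_Icc.mpr ⟨ht, htle⟩)
    · -- monotone beyond t₀
      have hmonoOn : MonotoneOn (φ f) (Set.Ici t₀) := by
        apply monotoneOn_of_deriv_nonneg (convex_Ici t₀)
        · have hdiff : Differentiable ℝ (φ f) := fun s => (hderiv f s).differentiableAt
          exact hdiff.continuous.continuousOn
        · have hdiff : Differentiable ℝ (φ f) := fun s => (hderiv f s).differentiableAt
          exact hdiff.differentiableOn
        · intro s hs
          rw [(hderiv f s).deriv]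
          have : t₀ ≤ s := le_of_lt (by simpa using hs)
          exact le_of_lt (lt_of_lt_of_le hpos₀ (hmono this))
      have h1 : φ f t₀ ≤ φ f t := hmonoOn Set.self_mem_Ici (le_of_lt htgt) (le_of_lt htgt)
      have h2 : c ≤ ‖NormedSpace.exp (t₀ • A) f‖ := hmin (Set.mem_Icc.mpr ⟨ht₀, le_refl _⟩)
      have h3 : ‖NormedSpace.exp (t₀ • A) f‖ ^ 2 ≤ ‖NormedSpace.exp (t • A) f‖ ^ 2 := by
        rw [hnorm, hnorm]; exact h1
      nlinarith [norm_nonneg (NormedSpace.exp (t • A) f),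
        norm_nonneg (NormedSpace.exp (t₀ • A) f)]
end

section
/- Let 𝕜 be ℝ or ℂ, let X be a nonzero Hilbert space over 𝕜, and let A be a bounded linear operator on X that is hypercyclic. Then the adjoint operator A* has no eigenvalues: for every λ ∈ 𝕜 and every g ∈ X, if A*g = λg then g = 0. -/
open scoped InnerProductSpace

/-- If a bounded linear operator `A` on a nonzero Hilbert space over `ℝ` or `ℂ` is hypercyclic,
then its adjoint `A*` has no eigenvalues. -/
theorem adjoint_no_eigenvalues_of_hypercyclic {𝕜 : Type*} [RCLike 𝕜] {X : Type*}
    [NormedAddCommGroup X] [InnerProductSpace 𝕜 X] [CompleteSpace X] [Nontrivial X]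
    (A : X →L[𝕜] X) (hhyp : ∃ f : X, DenseRange (fun n : ℕ => (A ^ n) f)) :
    ∀ (l : 𝕜) (g : X), ContinuousLinearMap.adjoint A g = l • g → g = 0 := by
  intro l g hAg
  by_contra hg
  obtain ⟨f, hf⟩ := hhyp
  -- powers of the adjoint act by powers of l on g
  have hpow : ∀ n : ℕ, ((ContinuousLinearMap.adjoint A) ^ n) g = l ^ n • g := by
    intro n
    induction n with
    | zero => simp
    | succ n ih =>
      rw [pow_succ, ContinuousLinearMap.mul_apply, hAg, map_smul, ih, smul_smul]
      congr 1
      ring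
  have hadj : ∀ n : ℕ, ContinuousLinearMap.adjoint (A ^ n) = (ContinuousLinearMap.adjoint A) ^ n := by
    intro n
    rw [← ContinuousLinearMap.star_eq_adjoint, ← ContinuousLinearMap.star_eq_adjoint, star_pow]
  set μ : 𝕜 := starRingEnd 𝕜 l with hμ
  set c : 𝕜 := ⟪g, f⟫_𝕜 with hc
  have key : ∀ n : ℕ, ⟪g, (A ^ n) f⟫_𝕜 = μ ^ n * c := by
    intro n
    rw [← ContinuousLinearMap.adjoint_inner_left, hadj, hpow, inner_smul_left, map_pow]
  -- the map x ↦ ⟪g, x⟫ is continuous and surjective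
  have hsurj : Function.Surjective (fun x : X => (⟪g, x⟫_𝕜 : 𝕜)) := by
    intro k
    refine ⟨(k / ⟪g, g⟫_𝕜) • g, ?_⟩
    have hgg : ⟪g, g⟫_𝕜 ≠ 0 := fun h => hg (inner_self_eq_zero.mp h)
    simp only [inner_smul_right]; exact div_mul_cancel₀ _ hgg
  have hcont : Continuous (fun x : X => (⟪g, x⟫_𝕜 : 𝕜)) := by
    exact (innerSL 𝕜 g).continuous
  have hdense : DenseRange (fun n : ℕ => ⟪g, (A ^ n) f⟫_𝕜) := by
    have := (hsurj.denseRange).comp hf hcont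
    exact this
  have hdense' : DenseRange (fun n : ℕ => μ ^ n * c) := by
    simpa only [key] using hdense
  by_cases hμ1 : ‖μ‖ ≤ 1
  · -- bounded orbit, not dense
    obtain ⟨n, hn⟩ := Metric.denseRange_iff.mp hdense' ((‖c‖ + 2 : ℝ) : 𝕜) 1 one_pos
    have h1 : ‖μ ^ n * c‖ ≤ ‖c‖ := by
      rw [norm_mul, norm_pow]
      calc ‖μ‖ ^ n * ‖c‖ ≤ 1 ^ n * ‖c‖ := by
            apply mul_le_mul_of_nonneg_right (pow_le_pow_left₀ (norm_nonneg _) hμ1 n) (norm_nonneg _)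
        _ = ‖c‖ := by ring
    have h2 : ‖((‖c‖ + 2 : ℝ) : 𝕜)‖ = ‖c‖ + 2 := by
      rw [RCLike.norm_ofReal]
      exact abs_of_nonneg (by positivity)
    have := norm_sub_norm_le (((‖c‖ + 2 : ℝ) : 𝕜)) (μ ^ n * c)
    rw [h2] at this
    rw [dist_eq_norm] at hn
    linarith
  · push_neg at hμ1
    by_cases hc0 : c = 0
    · -- orbit is {0}, not dense
      obtain ⟨n, hn⟩ := Metric.denseRange_iff.mp hdense' ((2 : ℝ) : 𝕜) 1 one_pos
      rw [hc0, mul_zero, dist_eq_norm, sub_zero] at hn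
      have : ‖((2 : ℝ) : 𝕜)‖ = 2 := by
        rw [RCLike.norm_ofReal]; norm_num
      linarith [this ▸ hn]
    · -- orbit stays away from 0
      obtain ⟨n, hn⟩ := Metric.denseRange_iff.mp hdense' 0 ‖c‖ (norm_pos_iff.mpr hc0)
      rw [dist_comm, dist_zero_right, norm_mul, norm_pow] at hn
      have h1 : ‖c‖ ≤ ‖μ‖ ^ n * ‖c‖ := by
        have : (1 : ℝ) ≤ ‖μ‖ ^ n := one_le_pow₀ (le_of_lt hμ1)
        nlinarith [norm_nonneg c]
      linarith
end

section
/- Let 𝕜 be ℝ or ℂ, let X be a nonzero Hilbert space over 𝕜, and let A be a bounded linear operator on X that is hypercyclic. Then for every λ ∈ 𝕜, the range of the operator A − λI is dense in X. -/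
/-- If a bounded linear operator `A` on a nonzero Hilbert space over `ℝ` or `ℂ` is hypercyclic,
then for every scalar `λ` the range of `A - λI` is dense. -/
theorem range_sub_smul_dense_of_hypercyclic {𝕜 : Type*} [RCLike 𝕜] {X : Type*}
    [NormedAddCommGroup X] [InnerProductSpace 𝕜 X] [CompleteSpace X] [Nontrivial X]
    (A : X →L[𝕜] X) (hhyp : ∃ f : X, DenseRange (fun n : ℕ => (A ^ n) f)) :
    ∀ l : 𝕜, Dense (Set.range fun x : X => A x - l • x) := by
  intro l
  obtain ⟨f, hf⟩ := hhyp
  by_contra hd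
  set T : X →L[𝕜] X := A - l • ContinuousLinearMap.id 𝕜 X with hT
  have hrange : (Set.range fun x : X => A x - l • x) = (LinearMap.range (T : X →ₗ[𝕜] X) : Set X) := by
    ext y
    simp [hT, ContinuousLinearMap.sub_apply, eq_comm]
  rw [hrange] at hd
  have htop : (LinearMap.range (T : X →ₗ[𝕜] X)).topologicalClosure ≠ ⊤ := fun h =>
    hd (Submodule.dense_iff_topologicalClosure_eq_top.mpr h)
  have horth : (LinearMap.range (T : X →ₗ[𝕜] X))ᗮ ≠ ⊥ := by
    intro h
    exact htop (Submodule.topologicalClosure_eq_top_iff.mpr h)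
  obtain ⟨v, hv, hv0⟩ := Submodule.exists_mem_ne_zero_of_ne_bot horth
  have hvz : ∀ u ∈ LinearMap.range (T : X →ₗ[𝕜] X), inner (𝕜 := 𝕜) v u = 0 :=
    (Submodule.mem_orthogonal' _ v).mp hv
  set φ : X →L[𝕜] 𝕜 := innerSL 𝕜 v with hφ
  have heig : ∀ x : X, φ (A x) = l * φ x := by
    intro x
    have := hvz (T x) (LinearMap.mem_range_self (T : X →ₗ[𝕜] X) x)
    simp only [hT, ContinuousLinearMap.sub_apply, ContinuousLinearMap.smul_apply,
      ContinuousLinearMap.id_apply, inner_sub_right, inner_smul_right, sub_eq_zero] at this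
    simpa [hφ] using this
  set c : 𝕜 := φ f with hc
  have key' : ∀ (n : ℕ) (x : X), φ ((A ^ n) x) = l ^ n * φ x := by
    intro n
    induction n with
    | zero => intro x; simp
    | succ n ih =>
        intro x
        rw [pow_succ, ContinuousLinearMap.mul_apply, ih, heig, pow_succ]
        ring
  have key : ∀ n : ℕ, φ ((A ^ n) f) = l ^ n * c := fun n => key' n f
  have hφv : φ v ≠ 0 := by
    simpa [hφ, inner_self_eq_zero] using hv0
  have hsurj : Function.Surjective φ := by
    intro w
    refine ⟨(w / φ v) • v, ?_⟩
    rw [map_smul, smul_eq_mul]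
    field_simp
  have hD : DenseRange (fun n : ℕ => l ^ n * c) := by
    have h1 := (hsurj.denseRange).comp hf φ.continuous
    have hcomp : (⇑φ ∘ fun n : ℕ => (A ^ n) f) = fun n : ℕ => l ^ n * c :=
      funext fun n => key n
    rwa [hcomp] at h1
  -- contradiction
  rcases eq_or_ne c 0 with hc0 | hc0
  · obtain ⟨n, hn⟩ := hD.exists_dist_lt (1 : 𝕜) (by norm_num : (0:ℝ) < 1/2)
    rw [hc0] at hn
    simp [dist_eq_norm] at hn
    norm_num at hn
  · have hcpos : 0 < ‖c‖ := norm_pos_iff.mpr hc0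
    rcases le_or_gt ‖l‖ 1 with hl | hl
    · obtain ⟨n, hn⟩ := hD.exists_dist_lt (2 * c) hcpos
      rw [dist_comm] at hn
      have hle : ‖l ^ n * c‖ ≤ ‖c‖ := by
        rw [norm_mul, norm_pow]
        nlinarith [pow_le_one₀ (norm_nonneg l) hl (n := n), norm_nonneg (l ^ n)]
      have : ‖c‖ ≤ dist (l ^ n * c) (2 * c) := by
        rw [dist_eq_norm]
        calc ‖c‖ = ‖2 * c‖ - ‖c‖ := by rw [norm_mul]; simp; ring
        _ ≤ ‖2 * c‖ - ‖l ^ n * c‖ := by linarith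
        _ ≤ ‖l ^ n * c - 2 * c‖ := by
            rw [norm_sub_rev]
            exact le_trans (sub_le_sub_left (le_refl _) _) (norm_sub_norm_le _ _)
      linarith
    · obtain ⟨n, hn⟩ := hD.exists_dist_lt (c / 2) (by positivity : (0:ℝ) < ‖c‖ / 2)
      rw [dist_comm] at hn
      have hge : ‖c‖ ≤ ‖l ^ n * c‖ := by
        rw [norm_mul, norm_pow]
        nlinarith [one_le_pow₀ (le_of_lt hl) (n := n)]
      have : ‖c‖ / 2 ≤ dist (l ^ n * c) (c / 2) := by
        rw [dist_eq_norm]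
        have h2 : ‖c / 2‖ = ‖c‖ / 2 := by rw [norm_div]; norm_num
        calc ‖c‖ / 2 = ‖c‖ - ‖c‖ / 2 := by ring
        _ ≤ ‖l ^ n * c‖ - ‖c / 2‖ := by rw [h2]; linarith
        _ ≤ ‖l ^ n * c - c / 2‖ := norm_sub_norm_le _ _
      linarith
end

section
/- Let X be a nonzero complex Hilbert space and let A be a bounded linear operator on X that is hypercyclic. Then the residual spectrum of A is empty: there is no λ ∈ ℂ such that A − λI is injective and the range of A − λI is not dense in X. -/
open scoped InnerProductSpace

/-- A hypercyclic bounded linear operator on a nonzero complex Hilbert space has empty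
residual spectrum. -/
theorem residual_spectrum_empty_of_hypercyclic {X : Type*} [NormedAddCommGroup X]
    [InnerProductSpace ℂ X] [CompleteSpace X] [Nontrivial X]
    (A : X →L[ℂ] X) (hhyp : ∃ f : X, DenseRange (fun n : ℕ => (A ^ n) f)) :
    ¬ ∃ l : ℂ, Function.Injective (fun x : X => A x - l • x) ∧
        ¬ Dense (Set.range fun x : X => A x - l • x) := by
  rintro ⟨l, -, hnd⟩
  obtain ⟨f, hf⟩ := hhyp
  set T : X →L[ℂ] X := A - l • ContinuousLinearMap.id ℂ X with hTdef
  have hT : ∀ x, T x = A x - l • x := fun x => rfl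
  set S : Submodule ℂ X := LinearMap.range (T : X →ₗ[ℂ] X) with hSdef
  have hSr : (Set.range fun x : X => A x - l • x) = (S : Set X) := by
    ext y
    constructor
    · rintro ⟨x, rfl⟩; exact ⟨x, rfl⟩
    · rintro ⟨x, rfl⟩; exact ⟨x, rfl⟩
  have hbot : Sᗮ ≠ ⊥ := by
    intro h
    apply hnd
    have htop : S.topologicalClosure = ⊤ := Submodule.topologicalClosure_eq_top_iff.mpr h
    rw [hSr, dense_iff_closure_eq, ← Submodule.topologicalClosure_coe, htop]
    rfl
  obtain ⟨g, hgS, hg0⟩ := (Submodule.ne_bot_iff _).mp hbot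
  have horth : ∀ x : X, ⟪g, T x⟫_ℂ = 0 := by
    intro x
    have := (Submodule.mem_orthogonal S g).mp hgS (T x) ⟨x, rfl⟩
    simpa [inner_eq_zero_symm] using this
  have heig : ∀ x : X, ⟪g, A x⟫_ℂ = l * ⟪g, x⟫_ℂ := by
    intro x
    have := horth x
    rw [hT] at this
    rw [inner_sub_right, inner_smul_right, sub_eq_zero] at this
    exact this
  set c : ℂ := ⟪g, f⟫_ℂ with hc
  have horbit : ∀ n : ℕ, ⟪g, (A ^ n) f⟫_ℂ = l ^ n * c := by
    intro n
    induction n with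
    | zero => simp [hc]
    | succ n ih =>
      rw [pow_succ', ContinuousLinearMap.mul_apply, heig, ih, pow_succ']
      ring
  have ψsurj : Function.Surjective (fun x : X => ⟪g, x⟫_ℂ) := by
    intro z
    refine ⟨(z / ⟪g, g⟫_ℂ) • g, ?_⟩
    have hgg : ⟪g, g⟫_ℂ ≠ 0 := inner_self_ne_zero.mpr hg0
    simp [inner_smul_right]
    field_simp
    exact mul_div_cancel_right₀ z (by exact_mod_cast norm_ne_zero_iff.mpr hg0)
  have ψcont : Continuous (fun x : X => ⟪g, x⟫_ℂ) := continuous_const.inner continuous_id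
  have hd : DenseRange (fun n : ℕ => l ^ n * c) := by
    have := (ψsurj.denseRange).comp hf ψcont
    have heq : ((fun x : X => ⟪g, x⟫_ℂ) ∘ fun n : ℕ => (A ^ n) f) =
        fun n : ℕ => l ^ n * c := by
      funext n; exact horbit n
    rwa [heq] at this
  by_cases hc0 : c = 0
  · have h1 : (1 : ℂ) ∈ closure (Set.range fun n : ℕ => l ^ n * c) := hd 1
    rw [Metric.mem_closure_iff] at h1
    obtain ⟨y, ⟨n, rfl⟩, hy⟩ := h1 (1/2) (by norm_num)
    simp [hc0, Complex.dist_eq] at hy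
    norm_num at hy
  · by_cases hl : ‖l‖ ≤ 1
    · have hz : ((‖c‖ + 1 : ℝ) : ℂ) ∈ closure (Set.range fun n : ℕ => l ^ n * c) :=
        hd _
      rw [Metric.mem_closure_iff] at hz
      obtain ⟨y, ⟨n, rfl⟩, hy⟩ := hz 1 (by norm_num)
      have hyn : ‖l ^ n * c‖ ≤ ‖c‖ := by
        rw [norm_mul, norm_pow]
        calc ‖l‖ ^ n * ‖c‖ ≤ 1 * ‖c‖ := by
              apply mul_le_mul_of_nonneg_right _ (norm_nonneg c)
              exact pow_le_one₀ (norm_nonneg l) hl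
          _ = ‖c‖ := one_mul _
      have hznorm : ‖((‖c‖ + 1 : ℝ) : ℂ)‖ = ‖c‖ + 1 := by
        rw [Complex.norm_real]
        exact abs_of_nonneg (by positivity)
      have := norm_sub_norm_le (((‖c‖ + 1 : ℝ) : ℂ)) (l ^ n * c)
      rw [hznorm] at this
      have : dist ((‖c‖ + 1 : ℝ) : ℂ) (l ^ n * c) ≥ 1 := by
        rw [dist_eq_norm]
        linarith
      linarith
    · push_neg at hl
      have h0 : (0 : ℂ) ∈ closure (Set.range fun n : ℕ => l ^ n * c) := hd 0
      rw [Metric.mem_closure_iff] at h0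
      obtain ⟨y, ⟨n, rfl⟩, hy⟩ := h0 ‖c‖ (norm_pos_iff.mpr hc0)
      have hyn : ‖l ^ n * c‖ ≥ ‖c‖ := by
        rw [norm_mul, norm_pow]
        calc ‖c‖ = 1 * ‖c‖ := (one_mul _).symm
          _ ≤ ‖l‖ ^ n * ‖c‖ := by
              apply mul_le_mul_of_nonneg_right _ (norm_nonneg c)
              exact one_le_pow₀ hl.le
      rw [dist_comm, dist_eq_norm, sub_zero] at hy
      linarith
end

section
/- Let X be a nonzero complex Hilbert space and let A be a (possibly unbounded) symmetric linear operator in X, given as a linear map A defined on a subspace D(A) ⊆ X satisfying ⟨Ax, y⟩ = ⟨x, Ay⟩ for all x, y ∈ D(A). Then A is not hypercyclic: there is no sequence (uₙ)_{n∈ℕ} in X with uₙ ∈ D(A) and A uₙ = u_{n+1} for all n ∈ ℕ, such that the set {uₙ : n ∈ ℕ} is dense in X. -/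
open scoped InnerProductSpace

/-- A (possibly unbounded) symmetric operator in a nonzero complex Hilbert space is not
hypercyclic. -/
theorem symmetric_not_hypercyclic {X : Type*} [NormedAddCommGroup X] [InnerProductSpace ℂ X]
    [CompleteSpace X] [Nontrivial X] (A : X →ₗ.[ℂ] X)
    (hsymm : ∀ x y : A.domain, ⟪A x, (y : X)⟫_ℂ = ⟪(x : X), A y⟫_ℂ) :
    ¬ ∃ (u : ℕ → X) (hmem : ∀ n, u n ∈ A.domain),
        (∀ n, A ⟨u n, hmem n⟩ = u (n + 1)) ∧ DenseRange u := by
  rintro ⟨u, hmem, hrec, hdense⟩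
  -- the norms are unbounded
  have hub : ∀ M : ℝ, ∃ n, M < ‖u n‖ := by
    intro M
    obtain ⟨x0, hx0⟩ := exists_ne (0 : X)
    have hx0n : ‖x0‖ ≠ 0 := norm_ne_zero_iff.mpr hx0
    set x : X := ((max M 0 + 1) / ‖x0‖) • x0 with hx
    have hxnorm : ‖x‖ = max M 0 + 1 := by
      rw [hx, norm_smul, norm_div, Real.norm_eq_abs, abs_of_nonneg (by positivity),
        norm_norm, div_mul_cancel₀ _ hx0n]
    obtain ⟨n, hn⟩ := hdense.exists_dist_lt x one_pos
    refine ⟨n, ?_⟩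
    have h1 : ‖x‖ - ‖u n‖ ≤ dist x (u n) := by
      rw [dist_eq_norm]; exact norm_sub_norm_le _ _
    have := le_max_left M 0
    linarith
  -- the norms get arbitrarily small
  have hlb : ∀ δ : ℝ, 0 < δ → ∃ n, ‖u n‖ < δ := by
    intro δ hδ
    obtain ⟨n, hn⟩ := hdense.exists_dist_lt 0 hδ
    exact ⟨n, by rwa [dist_zero_left] at hn⟩
  -- key symmetry identity
  have hstep : ∀ m n : ℕ, ⟪u (m + 1), u n⟫_ℂ = ⟪u m, u (n + 1)⟫_ℂ := by
    intro m n
    have := hsymm ⟨u m, hmem m⟩ ⟨u n, hmem n⟩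
    rwa [hrec m, hrec n] at this
  -- log-convexity of norms
  have hkey : ∀ n : ℕ, ‖u (n + 1)‖ ^ 2 ≤ ‖u (n + 2)‖ * ‖u n‖ := by
    intro n
    have h1 : ⟪u (n + 2), u n⟫_ℂ = ⟪u (n + 1), u (n + 1)⟫_ℂ := hstep (n + 1) n
    calc ‖u (n + 1)‖ ^ 2 = RCLike.re ⟪u (n + 1), u (n + 1)⟫_ℂ :=
          (inner_self_eq_norm_sq _).symm
      _ = RCLike.re ⟪u (n + 2), u n⟫_ℂ := by rw [h1]
      _ ≤ ‖⟪u (n + 2), u n⟫_ℂ‖ := RCLike.re_le_norm _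
      _ ≤ ‖u (n + 2)‖ * ‖u n‖ := norm_inner_le_norm _ _
  -- Case 1: some u N = 0
  by_cases hz : ∃ N, u N = 0
  · obtain ⟨N, hN⟩ := hz
    have hzero : ∀ n, N ≤ n → u n = 0 := by
      intro n hn
      induction n with
      | zero => exact Nat.le_zero.mp hn ▸ hN
      | succ k ih =>
        rcases Nat.lt_or_ge N (k + 1) with h | h
        · have hk : u k = 0 := ih (Nat.lt_succ_iff.mp h)
          have h0 : (⟨u k, hmem k⟩ : A.domain) = 0 := by
            ext; simpa using hk
          rw [← hrec k, h0]
          exact map_zero _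
        · exact (le_antisymm hn h) ▸ hN
    set M := (Finset.range (N + 1)).sup' (by simp) (fun n => ‖u n‖) with hM
    obtain ⟨n, hn⟩ := hub M
    have : ‖u n‖ ≤ M := by
      rcases Nat.lt_or_ge n (N + 1) with h | h
      · exact Finset.le_sup' (fun n => ‖u n‖) (Finset.mem_range.mpr h)
      · rw [hzero n (by omega), norm_zero]
        have : ‖u 0‖ ≤ M := Finset.le_sup' (fun n => ‖u n‖) (Finset.mem_range.mpr (by omega))
        have := norm_nonneg (u 0)
        linarith
    linarith
  -- Case 2: all u n ≠ 0
  push_neg at hz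
  have hpos : ∀ n, 0 < ‖u n‖ := fun n => norm_pos_iff.mpr (hz n)
  set r : ℕ → ℝ := fun n => ‖u (n + 1)‖ / ‖u n‖ with hr
  have hrmono : Monotone r := by
    apply monotone_nat_of_le_succ
    intro n
    rw [hr, div_le_div_iff₀ (hpos n) (hpos (n + 1))]
    calc ‖u (n + 1)‖ * ‖u (n + 1)‖ = ‖u (n + 1)‖ ^ 2 := (sq _).symm
      _ ≤ ‖u (n + 2)‖ * ‖u n‖ := hkey n
      _ = ‖u (n + 1 + 1)‖ * ‖u n‖ := rfl
  by_cases hone : ∃ N, 1 ≤ r N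
  · -- eventually nondecreasing norms: bounded below away from 0
    obtain ⟨N, hN⟩ := hone
    have hmono : ∀ n, N ≤ n → ‖u N‖ ≤ ‖u n‖ := by
      intro n hn
      induction n with
      | zero => exact le_of_eq (congrArg (fun m => ‖u m‖) (Nat.le_zero.mp hn))
      | succ k ih =>
        rcases Nat.lt_or_ge N (k + 1) with h | h
        · have h1 : ‖u N‖ ≤ ‖u k‖ := ih (Nat.lt_succ_iff.mp h)
          have h2 : 1 ≤ r k := le_trans hN (hrmono (Nat.lt_succ_iff.mp h))
          have h3 : ‖u k‖ ≤ ‖u (k + 1)‖ := by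
            rw [hr] at h2
            exact (one_le_div (hpos k)).mp h2
          linarith
        · have : N = k + 1 := by omega
          simp [this]
    set δ := (Finset.range (N + 1)).inf' (by simp) (fun n => ‖u n‖) with hδ
    have hδpos : 0 < δ := by
      rw [hδ, Finset.lt_inf'_iff]
      exact fun n _ => hpos n
    obtain ⟨n, hn⟩ := hlb δ hδpos
    have : δ ≤ ‖u n‖ := by
      rcases Nat.lt_or_ge n (N + 1) with h | h
      · exact Finset.inf'_le (fun n => ‖u n‖) (Finset.mem_range.mpr h)
      · calc δ ≤ ‖u N‖ := Finset.inf'_le (fun n => ‖u n‖) (Finset.mem_range.mpr (by omega))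
          _ ≤ ‖u n‖ := hmono n (by omega)
    linarith
  · -- norms decreasing: bounded above
    push_neg at hone
    have hdec : ∀ n, ‖u n‖ ≤ ‖u 0‖ := by
      intro n
      induction n with
      | zero => exact le_rfl
      | succ k ih =>
        have h1 : r k < 1 := hone k
        rw [hr] at h1
        have h2 : ‖u (k + 1)‖ < ‖u k‖ := (div_lt_one (hpos k)).mp h1
        linarith
    obtain ⟨n, hn⟩ := hub ‖u 0‖
    linarith [hdec n]
end

section
/- Let X be a nonzero complex Hilbert space and let A be a (possibly unbounded) densely defined self-adjoint operator in X, i.e., a linear map on a dense subspace D(A) ⊆ X that equals its Hilbert-space adjoint A*. Then A is not hypercyclic: there is no sequence (uₙ)_{n∈ℕ} in X with uₙ ∈ D(A) and A uₙ = u_{n+1} for all n ∈ ℕ, such that the set {uₙ : n ∈ ℕ} is dense in X. -/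
open scoped InnerProductSpace

/-- A (possibly unbounded) densely defined self-adjoint operator in a nonzero complex Hilbert
space is not hypercyclic. -/
theorem selfAdjoint_not_hypercyclic {X : Type*} [NormedAddCommGroup X] [InnerProductSpace ℂ X]
    [CompleteSpace X] [Nontrivial X] (A : X →ₗ.[ℂ] X)
    (hdense : Dense (A.domain : Set X)) (hsa : A.adjoint = A) :
    ¬ ∃ (u : ℕ → X) (hmem : ∀ n, u n ∈ A.domain),
        (∀ n, A ⟨u n, hmem n⟩ = u (n + 1)) ∧ DenseRange u := by
  rintro ⟨u, hmem, hrec, hdr⟩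
  have hfa : A.IsFormalAdjoint A := by
    have h := A.adjoint_isFormalAdjoint hdense
    rwa [hsa] at h
  set a : ℕ → ℝ := fun n => ‖u n‖ with ha
  -- key log-convexity inequality
  have key : ∀ n, a (n + 1) ^ 2 ≤ a n * a (n + 2) := by
    intro n
    have h1 : ⟪u (n + 1), u (n + 1)⟫_ℂ = ⟪u n, u (n + 2)⟫_ℂ := by
      have := hfa ⟨u n, hmem n⟩ ⟨u (n + 1), hmem (n + 1)⟩
      simpa [hrec n, hrec (n + 1)] using this
    calc a (n + 1) ^ 2 = ‖⟪u (n + 1), u (n + 1)⟫_ℂ‖ := by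
          rw [@inner_self_eq_norm_sq_to_K ℂ]; simp [ha]
      _ = ‖⟪u n, u (n + 2)⟫_ℂ‖ := by rw [h1]
      _ ≤ a n * a (n + 2) := norm_inner_le_norm _ _
  -- density gives arbitrarily small norms
  have hsmall : ∀ ε : ℝ, 0 < ε → ∃ n, a n < ε := by
    intro ε hε
    obtain ⟨n, hn⟩ := Metric.denseRange_iff.mp hdr 0 ε hε
    exact ⟨n, by simpa [ha, dist_eq_norm, norm_sub_rev] using hn⟩
  -- density gives arbitrarily large norms
  have hbig : ∀ M : ℝ, ∃ n, M < a n := by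
    intro M
    obtain ⟨x, hx⟩ := exists_ne (0 : X)
    set y : X := ((|M| + 2 : ℝ) / ‖x‖ : ℂ) • x with hy
    have hxn : (0:ℝ) < ‖x‖ := norm_pos_iff.mpr hx
    have hyn : ‖y‖ = |M| + 2 := by
      rw [hy, norm_smul, norm_div, Complex.norm_real, Complex.norm_real,
        Real.norm_eq_abs, Real.norm_eq_abs,
        abs_of_nonneg (by positivity : (0:ℝ) ≤ |M| + 2), abs_of_nonneg hxn.le]
      field_simp
    obtain ⟨n, hn⟩ := Metric.denseRange_iff.mp hdr y 1 one_pos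
    refine ⟨n, ?_⟩
    have : ‖y‖ - ‖u n‖ ≤ ‖y - u n‖ := norm_sub_norm_le _ _
    have hd : ‖y - u n‖ < 1 := by simpa [dist_eq_norm] using hn
    have : |M| + 2 - a n < 1 := by rw [← hyn]; linarith
    have hM : M ≤ |M| := le_abs_self M
    linarith
  -- if some iterate is zero, the orbit is eventually zero, contradicting large norms
  by_cases hz : ∃ m, u m = 0
  · obtain ⟨m, hm⟩ := hz
    have hzero : ∀ k, m ≤ k → u k = 0 := by
      intro k hk
      induction k with
      | zero => simpa [Nat.le_zero.mp hk] using hm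
      | succ j ih =>
        rcases Nat.lt_or_ge j m with hj | hj
        · have : m = j + 1 := le_antisymm hk hj
          simpa [← this] using hm
        · have hj0 : u j = 0 := ih hj
          have this2 : True := trivial
          have : (⟨u j, hmem j⟩ : A.domain) = 0 := Subtype.ext (by simp [hj0])
          rw [← hrec j, this]
          exact A.map_zero
    set B : ℝ := (Finset.range (m + 1)).sup' (by simp) a with hB
    obtain ⟨n, hn⟩ := hbig B
    rcases Nat.lt_or_ge n (m + 1) with h | h
    · exact absurd (Finset.le_sup' a (Finset.mem_range.mpr h)) (not_le.mpr hn)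
    · have hun : u n = 0 := hzero n (by omega)
      have : a n = 0 := by simp [ha, hun]
      have hB0 : a m ≤ B := Finset.le_sup' a (by simp)
      have : (0:ℝ) ≤ B := le_trans (norm_nonneg _) hB0
      linarith
  push_neg at hz
  have hapos : ∀ n, 0 < a n := fun n => norm_pos_iff.mpr (hz n)
  -- dichotomy
  by_cases hc : ∃ N, a N ≤ a (N + 1)
  · -- eventually nondecreasing, contradicting small norms
    obtain ⟨N, hN⟩ := hc
    have mono : ∀ n, N ≤ n → a n ≤ a (n + 1) := by
      intro n hn
      induction n with
      | zero =>
        have : N = 0 := Nat.le_zero.mp hn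
        simpa [this] using hN
      | succ m ih =>
        rcases Nat.lt_or_ge m N with hm | hm
        · have : N = m + 1 := le_antisymm hn hm
          simpa [this] using hN
        · have h1 : a m ≤ a (m + 1) := ih hm
          have h2 := key m
          have h0 : 0 ≤ a (m + 1) := norm_nonneg _
          have h3 : (0:ℝ) ≤ a (m + 2) := norm_nonneg _
          have hgoal : a (m + 1) ≤ a (m + 2) := by
            rcases eq_or_lt_of_le h0 with h0' | h0'
            · nlinarith
            · nlinarith [mul_le_mul_of_nonneg_right h1 h3]
          exact hgoal
    have ge : ∀ n, N ≤ n → a N ≤ a n := by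
      intro n hn
      induction n with
      | zero => simp [Nat.le_zero.mp hn]
      | succ m ih =>
        rcases Nat.lt_or_ge m N with hm | hm
        · have : N = m + 1 := le_antisymm hn hm
          simp [this]
        · exact le_trans (ih hm) (mono m hm)
    -- lower bound over all n
    set ε : ℝ := (Finset.range (N + 1)).inf' (by simp) a with hε
    have hεpos : ∀ n, ε ≤ a n := by
      intro n
      rcases Nat.lt_or_ge n (N + 1) with hn | hn
      · exact Finset.inf'_le a (Finset.mem_range.mpr hn)
      · have h1 : ε ≤ a N := Finset.inf'_le a (by simp)
        exact le_trans h1 (ge n (by omega))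
    have hεp : 0 < ε := by
      rw [hε, Finset.lt_inf'_iff]
      exact fun i _ => hapos i
    obtain ⟨n, hn⟩ := hsmall ε hεp
    exact absurd (hεpos n) (not_le.mpr hn)
  · push_neg at hc
    have dec : ∀ n, a n ≤ a 0 := by
      intro n
      induction n with
      | zero => exact le_refl _
      | succ m ih => exact le_trans (le_of_lt (hc m)) ih
    obtain ⟨n, hn⟩ := hbig (a 0)
    exact absurd (dec n) (not_le.mpr hn)
end

section
/- Let X be a nonzero complex Hilbert space and let A be a (possibly unbounded) densely defined linear operator in X that is hypercyclic, i.e., there is a sequence (uₙ)_{n∈ℕ} with uₙ ∈ D(A) and A uₙ = u_{n+1} for all n, whose range {uₙ : n ∈ ℕ} is dense in X. Then for every λ ∈ ℂ, the range {Ax − λx : x ∈ D(A)} of the operator A − λI is dense in X. -/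
open scoped ComplexConjugate
open InnerProductSpace

/-- If a densely defined (possibly unbounded) linear operator in a nonzero complex Hilbert
space is hypercyclic, then for every `λ ∈ ℂ` the range of `A - λI` is dense. -/
theorem range_sub_smul_dense_of_hypercyclic_unbounded {X : Type*} [NormedAddCommGroup X]
    [InnerProductSpace ℂ X] [CompleteSpace X] [Nontrivial X] (A : X →ₗ.[ℂ] X)
    (hdense : Dense (A.domain : Set X))
    (hhyp : ∃ (u : ℕ → X) (hmem : ∀ n, u n ∈ A.domain),
      (∀ n, A ⟨u n, hmem n⟩ = u (n + 1)) ∧ DenseRange u) :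
    ∀ l : ℂ, Dense {y : X | ∃ x : A.domain, A x - l • (x : X) = y} := by
  intro l
  obtain ⟨u, hmem, hAu, hdr⟩ := hhyp
  -- The range as a submodule
  set g : A.domain →ₗ[ℂ] X := A.toFun - l • A.domain.subtype with hg
  have hgapp : ∀ x : A.domain, g x = A x - l • (x : X) := fun x => rfl
  set K : Submodule ℂ X := LinearMap.range g with hK
  have hSeq : {y : X | ∃ x : A.domain, A x - l • (x : X) = y} = (K : Set X) := by
    ext y; simp [hK, LinearMap.mem_range, hgapp]
  rw [hSeq]
  by_contra hnd
  have hne : Kᗮ ≠ ⊥ := by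
    intro hbot
    exact hnd (Submodule.dense_iff_topologicalClosure_eq_top.2
      ((Submodule.topologicalClosure_eq_top_iff (K := K)).2 hbot))
  obtain ⟨z, hzK, hz0⟩ := Submodule.exists_mem_ne_zero_of_ne_bot hne
  have horth : ∀ x : A.domain, ⟪A x - l • (x : X), z⟫_ℂ = 0 := by
    intro x
    exact (Submodule.mem_orthogonal K z).1 hzK _ ⟨x, rfl⟩
  -- inner products with z
  set c : ℕ → ℂ := fun n => ⟪u n, z⟫_ℂ with hc
  have hrec : ∀ n, c (n + 1) = conj l * c n := by
    intro n
    have h := horth ⟨u n, hmem n⟩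
    rw [inner_sub_left, inner_smul_left, sub_eq_zero] at h
    simpa [hc, hAu n] using h
  have hpow : ∀ n, c n = (conj l) ^ n * c 0 := by
    intro n
    induction n with
    | zero => simp
    | succ n ih => rw [hrec n, ih]; ring
  -- the map x ↦ ⟪x, z⟫ is continuous and surjective
  have hcont : Continuous fun x : X => ⟪x, z⟫_ℂ :=
    Continuous.inner continuous_id continuous_const
  have hsurj : Function.Surjective fun x : X => ⟪x, z⟫_ℂ := by
    intro w
    refine ⟨(conj w / (‖z‖ ^ 2 : ℂ)) • z, ?_⟩
    have hz2 : ((‖z‖ : ℂ) ^ 2) ≠ 0 :=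
      pow_ne_zero 2 (by exact_mod_cast norm_ne_zero_iff.2 hz0)
    show ⟪(conj w / (‖z‖ ^ 2 : ℂ)) • z, z⟫_ℂ = w
    rw [inner_smul_left, inner_self_eq_norm_sq_to_K]
    field_simp
    rw [map_div₀, Complex.conj_conj, map_pow, Complex.conj_ofReal]
    field_simp
    exact mul_div_cancel_right₀ w (by simpa using hz0)
  have hdc : DenseRange c := by
    have : DenseRange fun x : X => ⟪x, z⟫_ℂ := hsurj.denseRange
    exact this.comp hdr hcont
  -- derive the contradiction
  by_cases h0 : c 0 = 0
  · have hall : ∀ n, c n = 0 := fun n => by rw [hpow n, h0, mul_zero]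
    obtain ⟨n, hn⟩ := Metric.denseRange_iff.1 hdc 1 (1/2) (by norm_num)
    rw [hall n] at hn
    simp at hn
    norm_num at hn
  · have hr : (0 : ℝ) < ‖c 0‖ := norm_pos_iff.2 h0
    by_cases hl : ‖conj l‖ ≤ 1
    · -- bounded orbit, misses 2‖c 0‖
      obtain ⟨n, hn⟩ := Metric.denseRange_iff.1 hdc ((2 * ‖c 0‖ : ℝ) : ℂ) ‖c 0‖ hr
      have hb : ‖c n‖ ≤ ‖c 0‖ := by
        rw [hpow n, norm_mul, norm_pow]
        calc ‖conj l‖ ^ n * ‖c 0‖ ≤ 1 ^ n * ‖c 0‖ := by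
              gcongr
          _ = ‖c 0‖ := by ring
      have : dist ((2 * ‖c 0‖ : ℝ) : ℂ) (c n) ≥ ‖c 0‖ := by
        have h1 : ‖((2 * ‖c 0‖ : ℝ) : ℂ)‖ = 2 * ‖c 0‖ := by
          simp [abs_of_nonneg (by positivity : (0:ℝ) ≤ 2 * ‖c 0‖)]
        calc dist ((2 * ‖c 0‖ : ℝ) : ℂ) (c n)
            ≥ ‖((2 * ‖c 0‖ : ℝ) : ℂ)‖ - ‖c n‖ := by
              rw [dist_eq_norm]; exact norm_sub_norm_le _ _
          _ ≥ 2 * ‖c 0‖ - ‖c 0‖ := by rw [h1]; linarith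
          _ = ‖c 0‖ := by ring
      linarith
    · -- orbit stays outside ball of radius ‖c 0‖ around 0
      push_neg at hl
      obtain ⟨n, hn⟩ := Metric.denseRange_iff.1 hdc 0 ‖c 0‖ hr
      have hb : ‖c 0‖ ≤ ‖c n‖ := by
        rw [hpow n, norm_mul, norm_pow]
        calc ‖c 0‖ = 1 ^ n * ‖c 0‖ := by ring
          _ ≤ ‖conj l‖ ^ n * ‖c 0‖ := by gcongr <;> exact le_of_lt hl
      rw [dist_zero_left] at hn
      linarith
end

section
/- Let X be a nonzero complex Hilbert space and let A be a bounded self-adjoint operator on X (A = A*). Then A is not hypercyclic and, moreover, the collection {e^{tA}}_{t≥0} is not hypercyclic: no vector f ∈ X has {Aⁿf : n ∈ ℕ} dense in X, and no vector f ∈ X has {e^{tA}f : t ≥ 0} dense in X. -/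
open scoped InnerProductSpace

lemma aux_dense_im_zero {X : Type*} [NormedAddCommGroup X]
    [InnerProductSpace ℂ X] (f : X) (S : Set X) (hd : Dense S)
    (h : ∀ y ∈ S, (⟪y, f⟫_ℂ).im = 0) : f = 0 := by
  have hcont : Continuous fun y : X => (⟪y, f⟫_ℂ).im :=
    Complex.continuous_im.comp (Continuous.inner continuous_id continuous_const)
  have hclosed : IsClosed {y : X | (⟪y, f⟫_ℂ).im = 0} :=
    isClosed_eq hcont continuous_const
  have h2 : closure S ⊆ {y : X | (⟪y, f⟫_ℂ).im = 0} :=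
    hclosed.closure_subset_iff.mpr h
  have hall : (⟪Complex.I • f, f⟫_ℂ).im = 0 := h2 (hd _)
  rw [inner_smul_left, inner_self_eq_norm_sq_to_K, Complex.conj_I] at hall
  simp [Complex.mul_im] at hall
  norm_cast at hall
  exact norm_eq_zero.mp (pow_eq_zero_iff two_ne_zero |>.mp hall)

/-- A bounded self-adjoint operator `A` on a nonzero complex Hilbert space is not hypercyclic,
and neither is the collection `{e^{tA}}_{t ≥ 0}` of its exponentials. -/
theorem selfAdjoint_bounded_not_hypercyclic {X : Type*} [NormedAddCommGroup X]
    [InnerProductSpace ℂ X] [CompleteSpace X] [Nontrivial X] (A : X →L[ℂ] X)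
    (hsa : ContinuousLinearMap.adjoint A = A) :
    (¬ ∃ f : X, DenseRange (fun n : ℕ => (A ^ n) f)) ∧
      (¬ ∃ f : X, Dense {y : X | ∃ t : ℝ, 0 ≤ t ∧ y = NormedSpace.exp (t • A) f}) := by
  have hstar : star A = A := by rw [ContinuousLinearMap.star_eq_adjoint]; exact hsa
  have hzero_not_dense : ¬ Dense ({0} : Set X) := by
    intro h
    obtain ⟨x, hx⟩ := exists_ne (0 : X)
    have hx0 : x ∈ closure ({0} : Set X) := h x
    rw [isClosed_singleton.closure_eq] at hx0
    exact hx hx0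
  have key : ∀ (B : X →L[ℂ] X) (f : X), star B = B → (⟪B f, f⟫_ℂ).im = 0 := by
    intro B f hB
    have h1 : ⟪B f, f⟫_ℂ = ⟪f, B f⟫_ℂ := by
      nth_rewrite 1 [← hB]
      rw [ContinuousLinearMap.star_eq_adjoint, ContinuousLinearMap.adjoint_inner_left]
    have h2 : starRingEnd ℂ ⟪B f, f⟫_ℂ = ⟪B f, f⟫_ℂ := by
      rw [inner_conj_symm, h1]
    exact Complex.conj_eq_iff_im.mp h2
  constructor
  · rintro ⟨f, hf⟩
    have hf' : f = 0 := by
      refine aux_dense_im_zero f _ hf ?_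
      rintro y ⟨n, rfl⟩
      exact key (A ^ n) f (by rw [star_pow, hstar])
    subst hf'
    apply hzero_not_dense
    have hr : Set.range (fun n : ℕ => (A ^ n) (0 : X)) = {0} := by
      ext y; simp
    rw [← hr]; exact hf
  · rintro ⟨f, hf⟩
    have hf' : f = 0 := by
      refine aux_dense_im_zero f _ hf ?_
      rintro y ⟨t, ht, rfl⟩
      refine key _ f ?_
      rw [NormedSpace.star_exp, star_smul, hstar, star_trivial]
    subst hf'
    apply hzero_not_dense
    have hr : {y : X | ∃ t : ℝ, 0 ≤ t ∧ y = NormedSpace.exp (t • A) (0 : X)} = {0} := by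
      ext y
      simp only [map_zero, Set.mem_setOf_eq, Set.mem_singleton_iff]
      exact ⟨fun ⟨t, _, h⟩ => h, fun h => ⟨0, le_rfl, h⟩⟩
    rw [← hr]; exact hf
end
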